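/- (Theorem II.1, spectral form.) Assume (H0) and d₁, d₂, l > 0. Then for every natural number k, every complex root λ of the τ = 0 characteristic equation λ² + (A_k − b₁₁)·λ + (B_k + C_k) = 0 has strictly negative real part. -/
import Mathlib


open Real

/-- Δ = M² − 4·K·(a·m + c·p)·(a·r₂ + c·d − c·r₀) with M = a·m + c·p + K·(a·r₂ + c·d). -/
noncomputable def Delta (r₀ r₂ K d a p c m : ℝ) : ℝ :=
  (a*m + c*p + K*(a*r₂ + c*d))^2 - 4*K*(a*m + c*p)*(a*r₂ + c*d - c*r₀)

/-- The positive equilibrium predator density v⋆. -/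
noncomputable def vstar (r₀ r₂ K d a p c m : ℝ) : ℝ :=
  (-(a*m + c*p + K*(a*r₂ + c*d)) + Real.sqrt (Delta r₀ r₂ K d a p c m)) / (2*K*(a*m + c*p))

/-- The positive equilibrium prey density u⋆ = (r₂ + m·v⋆)/c. -/
noncomputable def ustar (r₀ r₂ K d a p c m : ℝ) : ℝ := (r₂ + m * vstar r₀ r₂ K d a p c m) / c

/-- Linearization coefficient a₁₂. -/
noncomputable def a12 (r₀ r₂ K d a p c m : ℝ) : ℝ :=
  -K*r₀*ustar r₀ r₂ K d a p c m / (1 + K*vstar r₀ r₂ K d a p c m)^2 - p*ustar r₀ r₂ K d a p c m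

/-- Linearization coefficient a₂₁. -/
noncomputable def a21 (r₀ r₂ K d a p c m : ℝ) : ℝ := c * vstar r₀ r₂ K d a p c m

/-- Linearization coefficient a₂₂. -/
noncomputable def a22 (r₀ r₂ K d a p c m : ℝ) : ℝ := -m * vstar r₀ r₂ K d a p c m

/-- Linearization coefficient b₁₁. -/
noncomputable def b11 (r₀ r₂ K d a p c m : ℝ) : ℝ := -a * ustar r₀ r₂ K d a p c m

/-- A_k = (d₁ + d₂)·k²/l² − a₂₂. -/
noncomputable def Ak (r₀ r₂ K d a p c m d₁ d₂ l : ℝ) (k : ℕ) : ℝ :=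
  (d₁ + d₂)*(k:ℝ)^2/l^2 - a22 r₀ r₂ K d a p c m

/-- B_k = d₁·d₂·k⁴/l⁴ − a₂₂·d₁·k²/l² − a₁₂·a₂₁. -/
noncomputable def Bk (r₀ r₂ K d a p c m d₁ d₂ l : ℝ) (k : ℕ) : ℝ :=
  d₁*d₂*(k:ℝ)^4/l^4 - a22 r₀ r₂ K d a p c m * d₁*(k:ℝ)^2/l^2 - a12 r₀ r₂ K d a p c m * a21 r₀ r₂ K d a p c m

/-- C_k = −b₁₁·d₂·k²/l² + a₂₂·b₁₁. -/
noncomputable def Ck (r₀ r₂ K d a p c m d₁ d₂ l : ℝ) (k : ℕ) : ℝ :=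
  -(b11 r₀ r₂ K d a p c m)*d₂*(k:ℝ)^2/l^2 + a22 r₀ r₂ K d a p c m * b11 r₀ r₂ K d a p c m

lemma Apos (Z W d₁ d₂ kk ll : ℝ) (hZ : Z < 0) (hW : W < 0)
    (hd₁ : 0 < d₁) (hd₂ : 0 < d₂) (hkk : 0 ≤ kk) (hll : 0 < ll) :
    0 < (d₁ + d₂)*kk^2/ll^2 - Z - W := by
  have h1 : (0:ℝ) ≤ (d₁ + d₂)*kk^2/ll^2 := by positivity
  linarith

lemma BCpos (X Y Z W d₁ d₂ kk ll : ℝ) (hX : X < 0) (hY : 0 < Y) (hZ : Z < 0) (hW : W < 0)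
    (hd₁ : 0 < d₁) (hd₂ : 0 < d₂) (hkk : 0 ≤ kk) (hll : 0 < ll) :
    0 < (d₁*d₂*kk^4/ll^4 - Z * d₁*kk^2/ll^2 - X*Y) + (-W*d₂*kk^2/ll^2 + Z*W) := by
  have h1 : (0:ℝ) ≤ d₁*d₂*kk^4/ll^4 := by positivity
  have h2 : Z * d₁*kk^2/ll^2 ≤ 0 :=
    div_nonpos_of_nonpos_of_nonneg (by nlinarith [mul_nonneg hd₁.le (pow_nonneg hkk 2)]) (by positivity)
  have h3 : X*Y < 0 := mul_neg_of_neg_of_pos hX hY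
  have h4 : (0:ℝ) ≤ -W*d₂*kk^2/ll^2 := by
    apply div_nonneg (by nlinarith [mul_nonneg hd₂.le (pow_nonneg hkk 2)]) (by positivity)
  have h5 : 0 < Z*W := mul_pos_of_neg_of_neg hZ hW
  linarith

lemma quad_neg_re (B C : ℝ) (hB : 0 < B) (hC : 0 < C) (z : ℂ)
    (h : z^2 + (B:ℂ)*z + (C:ℂ) = 0) : z.re < 0 := by
  have hre := congrArg Complex.re h
  have him := congrArg Complex.im h
  simp [Complex.add_re, Complex.add_im, Complex.mul_re, Complex.mul_im, pow_two] at hre him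
  set x := z.re with hx
  set y := z.im with hy
  have him' : y * (2*x + B) = 0 := by ring_nf; ring_nf at him; linarith
  rcases mul_eq_zero.mp him' with h0 | h0
  · rw [h0] at hre
    by_contra hxn
    push_neg at hxn
    nlinarith
  · nlinarith

theorem stmt5 (r₀ r₂ K d a p c m d₁ d₂ l : ℝ) (hr₀ : 0 < r₀) (hr₂ : 0 < r₂) (hK : 0 < K) (hd : 0 < d) (ha : 0 < a) (hp : 0 < p) (hc : 0 < c) (hm : 0 < m)
    (hd₁ : 0 < d₁) (hd₂ : 0 < d₂) (hl : 0 < l)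
    (hH0 : a*r₂ + c*d - c*r₀ < 0) :
    ∀ (k : ℕ) (z : ℂ),
      z^2 + ((Ak r₀ r₂ K d a p c m d₁ d₂ l k - b11 r₀ r₂ K d a p c m : ℝ) : ℂ)*z + ((Bk r₀ r₂ K d a p c m d₁ d₂ l k + Ck r₀ r₂ K d a p c m d₁ d₂ l k : ℝ) : ℂ) = 0 →
      z.re < 0 := by
  intro k z hz
  have hS : 0 < a*m + c*p := by positivity
  have hM : 0 < a*m + c*p + K*(a*r₂ + c*d) := by positivity
  have hΔ : (a*m + c*p + K*(a*r₂ + c*d))^2 < Delta r₀ r₂ K d a p c m := by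
    unfold Delta
    nlinarith [mul_pos hK hS]
  have hsq : a*m + c*p + K*(a*r₂ + c*d) < Real.sqrt (Delta r₀ r₂ K d a p c m) :=
    (Real.lt_sqrt hM.le).mpr hΔ
  have hv : 0 < vstar r₀ r₂ K d a p c m := by
    unfold vstar
    apply div_pos (by linarith) (by positivity)
  have hu : 0 < ustar r₀ r₂ K d a p c m := by
    unfold ustar
    apply div_pos (by nlinarith) hc
  set v := vstar r₀ r₂ K d a p c m
  set u := ustar r₀ r₂ K d a p c m
  have ha12 : a12 r₀ r₂ K d a p c m < 0 := by
    unfold a12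
    have h1 : -K*r₀*u / (1 + K*v)^2 ≤ 0 := by
      apply div_nonpos_of_nonpos_of_nonneg (by nlinarith [mul_pos (mul_pos hK hr₀) hu]) (by positivity)
    nlinarith [mul_pos hp hu]
  have ha21 : 0 < a21 r₀ r₂ K d a p c m := mul_pos hc hv
  have ha22 : a22 r₀ r₂ K d a p c m < 0 := by
    unfold a22; nlinarith
  have hb11 : b11 r₀ r₂ K d a p c m < 0 := by
    unfold b11; nlinarith
  have hB : 0 < Ak r₀ r₂ K d a p c m d₁ d₂ l k - b11 r₀ r₂ K d a p c m := by
    unfold Ak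
    exact Apos _ _ _ _ _ _ ha22 hb11 hd₁ hd₂ (by positivity) hl
  have hC : 0 < Bk r₀ r₂ K d a p c m d₁ d₂ l k + Ck r₀ r₂ K d a p c m d₁ d₂ l k := by
    unfold Bk Ck
    exact BCpos _ _ _ _ _ _ _ _ ha12 ha21 ha22 hb11 hd₁ hd₂ (by positivity) hl
  exact quad_neg_re _ _ hB hC z hz
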